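/- For every natural number Q and all real numbers x and y, the double sum over r from 0 to Q and s from 0 to Q−r of C(Q+1, r+s+1)·x^r·y^s/(r!·s!) equals (Q+1) times the sum over k from 0 to Q of C(Q,k)·(x+y)^k/(k+1)!. -/

import Mathlib

open Finset

/-- Equation (5.4a), step two:
`∑_{r=0}^{Q} ∑_{s=0}^{Q−r} C(Q+1, r+s+1)·xʳ·yˢ/(r!·s!)
  = (Q+1)·∑_{k=0}^{Q} C(Q,k)·(x+y)ᵏ/(k+1)!`. -/
theorem stmt_8 (Q : ℕ) (x y : ℝ) :
    ∑ r ∈ Finset.range (Q + 1), ∑ s ∈ Finset.range (Q - r + 1),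
        (Nat.choose (Q + 1) (r + s + 1) : ℝ) * x ^ r * y ^ s
          / ((Nat.factorial r : ℝ) * (Nat.factorial s : ℝ))
      = ((Q : ℝ) + 1) *
          ∑ k ∈ Finset.range (Q + 1),
            (Nat.choose Q k : ℝ) * (x + y) ^ k / (Nat.factorial (k + 1) : ℝ) := by
  rw [Finset.mul_sum]
  conv_rhs =>
    rw [Finset.sum_congr rfl (fun k _ => by rw [add_pow])]
  simp only [Finset.mul_sum, Finset.sum_div]
  rw [Finset.sum_sigma', Finset.sum_sigma']
  apply Finset.sum_nbij' (i := fun p => ⟨p.1 + p.2, p.1⟩)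
    (j := fun p => ⟨p.2, p.1 - p.2⟩)
  · rintro ⟨r, s⟩ h
    simp only [Finset.mem_sigma, Finset.mem_range] at h ⊢
    omega
  · rintro ⟨k, r⟩ h
    simp only [Finset.mem_sigma, Finset.mem_range] at h ⊢
    omega
  · rintro ⟨r, s⟩ h
    simp
  · rintro ⟨k, r⟩ h
    simp only [Finset.mem_sigma, Finset.mem_range] at h
    simp only [Sigma.mk.inj_iff]
    constructor
    · omega
    · exact heq_of_eq rfl
  · rintro ⟨r, s⟩ h
    simp only [Finset.mem_sigma, Finset.mem_range] at h
    have hrs : r + s - r = s := by omega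
    rw [hrs]
    have h1 : (r+s).choose r * (Nat.factorial r * Nat.factorial s) = Nat.factorial (r+s) := by
      have := Nat.choose_mul_factorial_mul_factorial (Nat.le_add_right r s)
      rw [hrs] at this
      rw [← mul_assoc]
      exact this
    have h2 : (Q+1) * Q.choose (r+s) = (Q+1).choose (r+s+1) * (r+s+1) := by
      simpa using Nat.add_one_mul_choose_eq Q (r+s)
    have h1c : (((r+s).choose r : ℝ)) * ((Nat.factorial r : ℝ) * (Nat.factorial s : ℝ)) = (Nat.factorial (r+s) : ℝ) := by
      exact_mod_cast h1
    have h2c : ((Q:ℝ)+1) * ((Q.choose (r+s) : ℝ)) = (((Q+1).choose (r+s+1) : ℝ)) * ((r:ℝ)+(s:ℝ)+1) := by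
      exact_mod_cast h2
    have key : (((Q+1).choose (r+s+1) : ℝ)) * (Nat.factorial (r+s+1) : ℝ) =
        ((Q:ℝ)+1) * (Q.choose (r+s)) * ((r+s).choose r) * ((Nat.factorial r : ℝ) * (Nat.factorial s : ℝ)) := by
      rw [Nat.factorial_succ]
      push_cast
      linear_combination (-(((Q:ℝ)+1) * (Q.choose (r+s)))) * h1c - (Nat.factorial (r+s) : ℝ) * h2c
    have hr0 : (Nat.factorial r : ℝ) ≠ 0 := Nat.cast_ne_zero.mpr (Nat.factorial_ne_zero r)
    have hs0 : (Nat.factorial s : ℝ) ≠ 0 := Nat.cast_ne_zero.mpr (Nat.factorial_ne_zero s)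
    have hk0 : (Nat.factorial (r+s+1) : ℝ) ≠ 0 := Nat.cast_ne_zero.mpr (Nat.factorial_ne_zero _)
    field_simp
    linear_combination (x^r * y^s) * key
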